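/- Let q be an odd prime power, P ∈ 𝔽_q[T] monic irreducible, and h = (h₁,…,h_k) a k-tuple of pairwise distinct polynomials in 𝔽_q[T]. Then δ_{q,h}(P) = 0 if and only if 𝒜_{q,h}(P^ν) = ∅ for some ν ≥ 1. -/

import Mathlib

open Polynomial Filter

open scoped Classical

noncomputable section

variable (F : Type*) [Field F] [Fintype F]

/-- `f` is a sum of two squares in the function-field sense: `f = A² + T·B²`. -/
def IsSOS (f : F[X]) : Prop := ∃ A B : F[X], f = A ^ 2 + X * B ^ 2

/-- The indicator function `b_q` of sums of two squares. -/
def bq (f : F[X]) : ℝ := if IsSOS F f then 1 else 0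

/-- `r_q(f)`: the number of representations `f = A² + T·B²`, counted up to sign. -/
def rq (f : F[X]) : ℝ :=
  (Nat.card {p : F[X] × F[X] // f = p.1 ^ 2 + X * p.2 ^ 2} : ℝ) / 2

/-- Indicator of monic irreducible (prime) polynomials. -/
def primeInd (f : F[X]) : ℝ := if f.Monic ∧ Irreducible f then 1 else 0

/-- The `r`-divisor function: number of ordered factorizations into `r` monic factors. -/
def dr (r : ℕ) (f : F[X]) : ℝ :=
  (Nat.card {g : Fin r → F[X] // (∀ i, (g i).Monic) ∧ ∏ i, g i = f} : ℝ)

/-- The quadratic character modulo `T`. -/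
def chiq (f : F[X]) : ℝ :=
  if f.eval 0 = 0 then 0 else if IsSquare (f.eval 0) then 1 else -1

/-- The norm `|P| = q^{deg P}`. -/
def absP (P : F[X]) : ℝ := (Fintype.card F : ℝ) ^ P.natDegree

/-- `𝒜_q(g) = {A² + T·B² mod g}` inside `𝔽_q[T]/(g)`. -/
def Aset (g : F[X]) : Set (F[X] ⧸ Ideal.span {g}) :=
  {x | ∃ A B : F[X], x = Ideal.Quotient.mk (Ideal.span {g}) (A ^ 2 + X * B ^ 2)}

/-- `𝒜_{q,h}(g) = {f : f + hᵢ ∈ 𝒜_q(g) for all i}`. -/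
def Ahset {k : ℕ} (h : Fin k → F[X]) (g : F[X]) : Set (F[X] ⧸ Ideal.span {g}) :=
  {x | ∀ i, x + Ideal.Quotient.mk (Ideal.span {g}) (h i) ∈ Aset F g}

/-- `Ω_{q,h}(g)`: elements of `𝒜_{q,h}(g)` with `f + hᵢ ≡ 0` for some `i`. -/
def OmegaSet {k : ℕ} (h : Fin k → F[X]) (g : F[X]) : Set (F[X] ⧸ Ideal.span {g}) :=
  {x ∈ Ahset F h g | ∃ i, x + Ideal.Quotient.mk (Ideal.span {g}) (h i) = 0}

/-- `Ω*_{q,h}(g)`: elements of `𝒜_{q,h}(g)` with `f + hᵢ ≢ 0` for all `i`. -/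
def OmegaStar {k : ℕ} (h : Fin k → F[X]) (g : F[X]) : Set (F[X] ⧸ Ideal.span {g}) :=
  {x ∈ Ahset F h g | ∀ i, x + Ideal.Quotient.mk (Ideal.span {g}) (h i) ≠ 0}

/-- `δ_{q,h}(P) = lim_ν |P|^{-ν} #𝒜_{q,h}(P^ν)`; since the sequence is monotonically
decreasing and nonnegative, the limit equals the infimum. -/
def deltaP {k : ℕ} (h : Fin k → F[X]) (P : F[X]) : ℝ :=
  ⨅ ν : ℕ, (Nat.card ↥(Ahset F h (P ^ ν)) : ℝ) / absP F P ^ ν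

/-- The singular series `𝔖_{q,h} = ∏_P δ_{q,h}(P)/δ_{q,0}(P)^k`. -/
def singSeries {k : ℕ} (h : Fin k → F[X]) : ℝ :=
  ∏' P : {P : F[X] // P.Monic ∧ Irreducible P},
    deltaP F h P.1 / deltaP F (fun _ : Fin 1 => (0 : F[X])) P.1 ^ k

/-- `𝔖_h = 2^{k − #{h₁(0),…,h_k(0)}}`. -/
def Sfrak {k : ℕ} (h : Fin k → F[X]) : ℝ :=
  2 ^ (k - Set.ncard (Set.range fun i => (h i).eval 0))

/-- `𝔇_h = 1` iff every value `a ∈ 𝔽_q` is attained by an even number of the `hᵢ(0)`. -/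
def Dfrak {k : ℕ} (h : Fin k → F[X]) : ℝ :=
  if ∀ a : F, Even (Nat.card {i : Fin k // (h i).eval 0 = a}) then 1 else 0

/-- The average of `ψ` over all monic polynomials of degree `n`
(parametrized by their lower `n` coefficients). -/
def monicAvg (n : ℕ) (ψ : F[X] → ℝ) : ℝ :=
  (∑ a : Fin n → F, ψ (X ^ n + ∑ i : Fin n, C (a i) * X ^ (i : ℕ))) /
    (Fintype.card F : ℝ) ^ n

/-- The average of `ψ` over the short interval `{f : deg(f - f₀) < m}` around `f₀`,
parametrized by the `m` free lowest coefficients. -/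
def intervalAvg (f0 : F[X]) (m : ℕ) (ψ : F[X] → ℝ) : ℝ :=
  (∑ a : Fin m → F, ψ (f0 + ∑ i : Fin m, C (a i) * X ^ (i : ℕ))) /
    (Fintype.card F : ℝ) ^ m

end

section AuxLocalObstruction
variable {F : Type} [Field F] [Fintype F]

set_option linter.unusedSectionVars false

/-- Auxiliary: a "smooth" (Hensel-liftable) representation of `f` as a sum of two
squares modulo `P^ν`. -/
def GoodRep (P f : F[X]) (ν : ℕ) : Prop :=
  ∃ A B : F[X], ∃ a : ℕ, ∃ u : F[X],
    P ^ ν ∣ f - (A ^ 2 + X * B ^ 2) ∧ 2 * a + 1 ≤ ν ∧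
      (A = P ^ a * u ∨ X * B = P ^ a * u) ∧ ¬ P ∣ u

lemma aux_two_ne_zero (hF : Odd (Fintype.card F)) : (2 : F) ≠ 0 := by
  intro h2
  have hchar : ringChar F ∣ 2 :=
    (CharP.cast_eq_zero_iff F (ringChar F) 2).mp (by exact_mod_cast h2)
  have h1 : ringChar F ≠ 1 := CharP.ringChar_ne_one
  have h2' : ringChar F = 2 := by
    rcases (Nat.dvd_prime Nat.prime_two).mp hchar with h | h
    · exact absurd h h1
    · exact h
  have heven := FiniteField.even_card_of_char_two h2'
  rw [Nat.odd_iff] at hF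
  omega

lemma aux_exists_inv {P u : F[X]} (hPi : Irreducible P) (hu : ¬ P ∣ u) (w : F[X]) :
    ∃ s r : F[X], w - u * s = P * r := by
  haveI hmax : (Ideal.span {P}).IsMaximal := PrincipalIdealRing.isMaximal_of_irreducible hPi
  letI : Field (F[X] ⧸ Ideal.span {P}) := Ideal.Quotient.field _
  set mk := Ideal.Quotient.mk (Ideal.span {P}) with hmk
  have hu' : mk u ≠ 0 := by
    simpa [hmk, Ideal.Quotient.eq_zero_iff_mem, Ideal.mem_span_singleton] using hu
  obtain ⟨s, hs⟩ := Ideal.Quotient.mk_surjective (I := Ideal.span {P}) (mk w * (mk u)⁻¹)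
  have hcanc : mk u * (mk u)⁻¹ = 1 := mul_inv_cancel₀ hu'
  have : mk (w - u * s) = 0 := by
    rw [map_sub, map_mul, hs, ← mul_assoc, mul_comm (mk u) (mk w), mul_assoc, hcanc,
      mul_one, sub_self]
  rw [Ideal.Quotient.eq_zero_iff_mem, Ideal.mem_span_singleton] at this
  obtain ⟨r, hr⟩ := this
  exact ⟨s, r, hr⟩

lemma hensel_step (h2 : (2 : F) ≠ 0) {P : F[X]} (hPi : Irreducible P) {f : F[X]} {ν : ℕ}
    (hgood : GoodRep P f ν) (g : F[X]) : GoodRep P (f + P ^ ν * g) (ν + 1) := by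
  obtain ⟨A, B, a, u, hdvd, hb, hbr, hu⟩ := hgood
  obtain ⟨w, hw⟩ := hdvd
  have hunit : IsUnit (2 : F[X]) := by
    have := Polynomial.isUnit_C.mpr (IsUnit.mk0 (2 : F) h2)
    rwa [map_ofNat] at this
  have h2P : ¬ P ∣ (2 * u : F[X]) := by
    intro hd
    rcases hPi.prime.dvd_mul.mp hd with hd | hd
    · exact hPi.not_isUnit (isUnit_of_dvd_unit hd hunit)
    · exact hu hd
  obtain ⟨c, hc⟩ : ∃ c, ν = 2 * a + c + 1 := ⟨ν - (2 * a + 1), by omega⟩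
  subst hc
  rcases hbr with hA | hXB
  · obtain ⟨s, r, hsr⟩ := aux_exists_inv hPi h2P (w + g)
    refine ⟨P ^ a * (u + P ^ (c+1) * s), B, a, u + P ^ (c+1) * s,
      ⟨r - P ^ c * s ^ 2, ?_⟩, by omega, Or.inl rfl, ?_⟩
    · subst hA
      linear_combination hw + P ^ (2*a+c+1) * hsr
    · intro hd
      exact hu (by
        have : P ∣ P ^ (c+1) * s := Dvd.dvd.mul_right (dvd_pow_self P (Nat.succ_ne_zero c)) s
        simpa using (dvd_sub hd this))
  · obtain ⟨t, r, hsr⟩ := aux_exists_inv hPi h2P (w + g)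
    refine ⟨A, B + P ^ (a+c+1) * t, a, u + X * P ^ (c+1) * t,
      ⟨r - X * P ^ c * t ^ 2, ?_⟩, by omega, Or.inr ?_, ?_⟩
    · linear_combination hw + P ^ (2*a+c+1) * hsr - 2 * t * P ^ (a+c+1) * hXB
    · linear_combination hXB
    · intro hd
      exact hu (by
        have : P ∣ X * P ^ (c+1) * t :=
          Dvd.dvd.mul_right (Dvd.dvd.mul_left (dvd_pow_self P (Nat.succ_ne_zero c)) X) t
        simpa using (dvd_sub hd this))

lemma goodRep_of_rep {P : F[X]} (hPm : P.Monic) (hPi : Irreducible P) {y A B : F[X]}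
    {v N ν' : ℕ} (h1 : P ^ N ∣ y - (A ^ 2 + X * B ^ 2)) (h2 : ¬ P ^ (v+1) ∣ y)
    (h3 : v + 2 ≤ ν') (h4 : ν' ≤ N) : GoodRep P y ν' := by
  have hdvd' : P ^ ν' ∣ y - (A ^ 2 + X * B ^ 2) := (pow_dvd_pow P h4).trans h1
  have hv1 : P ^ (v+1) ∣ y - (A ^ 2 + X * B ^ 2) :=
    (pow_dvd_pow P (by omega)).trans h1
  have hSOS : ¬ P ^ (v+1) ∣ (A ^ 2 + X * B ^ 2) := by
    intro hd
    exact h2 (by simpa using dvd_add hv1 hd)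
  by_cases hA2 : P ^ (v+1) ∣ A ^ 2
  · have hXB2 : ¬ P ^ (v+1) ∣ X * B ^ 2 := by
      intro hd
      exact hSOS (dvd_add hA2 hd)
    have hB : B ≠ 0 := by rintro rfl; simp at hXB2
    have hXB : X * B ≠ 0 := mul_ne_zero X_ne_zero hB
    obtain ⟨a, u, hu, hfac⟩ := WfDvdMonoid.max_power_factor hXB hPi
    refine ⟨A, B, a, u, hdvd', ?_, Or.inr hfac, hu⟩
    by_contra hcon
    have ha : v + 2 ≤ 2 * a := by omega
    by_cases hPX : P ∣ X
    · have hPeqX : P = X :=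
        eq_of_monic_of_associated hPm monic_X (hPi.associated_of_dvd irreducible_X hPX)
      subst hPeqX
      have ha1 : 1 ≤ a := by
        by_contra hb
        have ha0 : a = 0 := by omega
        rw [ha0, pow_zero, one_mul] at hfac
        exact hu (hfac ▸ dvd_mul_right X B)
      obtain ⟨a', rfl⟩ : ∃ a', a = a' + 1 := ⟨a - 1, by omega⟩
      have hBfac : B = X ^ a' * u := by
        have h' : X * B = X * (X ^ a' * u) := by
          rw [hfac]; ring
        exact mul_left_cancel₀ X_ne_zero h'
      have : X ^ (v+1) ∣ X * B ^ 2 := by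
        have hXB2' : X * B ^ 2 = X ^ (2 * a' + 1) * u ^ 2 := by
          rw [hBfac]; ring
        rw [hXB2']
        exact Dvd.dvd.mul_right (pow_dvd_pow X (by omega)) _
      exact hXB2 this
    · have hPaB : P ^ a ∣ B := by
        have : P ^ a ∣ X * B := hfac ▸ dvd_mul_right _ _
        exact hPi.prime.pow_dvd_of_dvd_mul_left a hPX this
      obtain ⟨B', rfl⟩ := hPaB
      have : P ^ (v+1) ∣ X * (P ^ a * B') ^ 2 := by
        have hd1 : P ^ (v+1) ∣ P ^ (2*a) := pow_dvd_pow P (by omega)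
        have hd2 : X * (P ^ a * B') ^ 2 = P ^ (2*a) * (X * B' ^ 2) := by ring
        rw [hd2]
        exact hd1.mul_right _
      exact hXB2 this
  · have hA : A ≠ 0 := by rintro rfl; simp at hA2
    obtain ⟨a, u, hu, hfac⟩ := WfDvdMonoid.max_power_factor hA hPi
    refine ⟨A, B, a, u, hdvd', ?_, Or.inl hfac, hu⟩
    by_contra hcon
    have ha : v + 1 ≤ 2 * a := by omega
    have : P ^ (v+1) ∣ A ^ 2 := by
      have h1' : A ^ 2 = P ^ (2*a) * u ^ 2 := by rw [hfac]; ring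
      rw [h1']
      exact (pow_dvd_pow P ha).mul_right _
    exact hA2 this

lemma aux_preimage_card {G H : Type*} [AddCommGroup G] [AddCommGroup H] (φ : G →+ H)
    (hφ : Function.Surjective φ) (S : Set H) :
    Nat.card (φ ⁻¹' S) = Nat.card S * Nat.card (φ ⁻¹' ({0} : Set H)) := by
  classical
  set σ := Function.surjInv hφ with hσdef
  have hσ : ∀ y, φ (σ y) = y := Function.surjInv_eq hφ
  have e : (φ ⁻¹' S) ≃ S × (φ ⁻¹' ({0} : Set H)) := by
    refine ⟨fun x => (⟨φ x.1, x.2⟩, ⟨x.1 - σ (φ x.1), by simp [hσ]⟩),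
      fun p => ⟨σ p.1.1 + p.2.1, by
        have h0 : φ p.2.1 = 0 := p.2.2
        simp [hσ, h0, p.1.2]⟩, ?_, ?_⟩
    · intro x
      ext
      simp only []
      abel
    · intro p
      have h0 : φ p.2.1 = 0 := p.2.2
      ext
      · simp [hσ, h0]
      · show σ p.1.1 + p.2.1 - σ (φ (σ p.1.1 + p.2.1)) = p.2.1
        rw [map_add, hσ, h0, add_zero]
        abel
  rw [Nat.card_congr e, Nat.card_prod]

lemma aux_card_quo {g : F[X]} (hg : g.Monic) :
    Nat.card (F[X] ⧸ Ideal.span {g}) = Fintype.card F ^ g.natDegree := by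
  have b : Module.Basis (Fin g.natDegree) F (AdjoinRoot g) := AdjoinRoot.powerBasisAux' hg
  have e : (F[X] ⧸ Ideal.span {g}) ≃ (Fin g.natDegree → F) := b.equivFun.toEquiv
  rw [Nat.card_congr e]
  simp [Nat.card_eq_fintype_card]

lemma aux_finite_quo {g : F[X]} (hg : g.Monic) : Finite (F[X] ⧸ Ideal.span {g}) := by
  have b : Module.Basis (Fin g.natDegree) F (AdjoinRoot g) := AdjoinRoot.powerBasisAux' hg
  have e : (F[X] ⧸ Ideal.span {g}) ≃ (Fin g.natDegree → F) := b.equivFun.toEquiv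
  exact Finite.of_equiv _ e.symm

end AuxLocalObstruction

section AuxLocalObstruction2
open Polynomial
variable {F : Type} [Field F] [Fintype F]

set_option linter.unusedSectionVars false

/-- Residues admitting a lift all of whose shifts have smooth SOS representations. -/
def TsetAux {k : ℕ} (P : F[X]) (h : Fin k → F[X]) (ν : ℕ) :
    Set (F[X] ⧸ Ideal.span {P ^ ν}) :=
  {x | ∃ f : F[X], Ideal.Quotient.mk (Ideal.span {P ^ ν}) f = x ∧ ∀ i, GoodRep P (f + h i) ν}

lemma tsetAux_subset {k : ℕ} (P : F[X]) (h : Fin k → F[X]) (ν : ℕ) :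
    TsetAux P h ν ⊆ Ahset F h (P ^ ν) := by
  rintro x ⟨f, rfl, hgood⟩
  intro i
  obtain ⟨A, B, a, u, hdvd, -, -, -⟩ := hgood i
  refine ⟨A, B, ?_⟩
  rw [← map_add, Ideal.Quotient.eq, Ideal.mem_span_singleton]
  exact hdvd

lemma exists_good {P : F[X]} (h2 : (2 : F) ≠ 0) (hPm : P.Monic) (hPi : Irreducible P)
    {k : ℕ} (h : Fin k → F[X]) (hinj : Function.Injective h)
    (hne : ∀ ν : ℕ, 1 ≤ ν → (Ahset F h (P ^ ν)).Nonempty) :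
    ∃ (f₀ : F[X]) (ν₀ : ℕ), 1 ≤ ν₀ ∧ ∀ i, GoodRep P (f₀ + h i) ν₀ := by
  classical
  set V : ℕ := 1 + Finset.univ.sup (fun p : Fin k × Fin k => (h p.1 - h p.2).natDegree) with hVdef
  have hdP : 1 ≤ P.natDegree := hPi.natDegree_pos
  have hV : ∀ i j, i ≠ j → ¬ P ^ V ∣ (h i - h j) := by
    intro i j hij hdvd
    have hne0 : h i - h j ≠ 0 := sub_ne_zero.mpr (fun e => hij (hinj e))
    have hdeg := Polynomial.natDegree_le_of_dvd hdvd hne0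
    rw [Polynomial.natDegree_pow] at hdeg
    have hsup : (h i - h j).natDegree ≤
        Finset.univ.sup (fun p : Fin k × Fin k => (h p.1 - h p.2).natDegree) :=
      Finset.le_sup (f := fun p : Fin k × Fin k => (h p.1 - h p.2).natDegree) (b := (i, j))
        (Finset.mem_univ (i, j))
    have hmul : V ≤ V * P.natDegree := Nat.le_mul_of_pos_right V (by omega)
    omega
  set M : ℕ := V + 1 with hMdef
  set N : ℕ := 2 * M + 2 with hNdef
  obtain ⟨x, hx⟩ := hne N (by omega)
  obtain ⟨f, hf⟩ := Ideal.Quotient.mk_surjective (I := Ideal.span {P ^ N}) x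
  have hrep : ∀ i, ∃ A B : F[X], P ^ N ∣ (f + h i) - (A ^ 2 + X * B ^ 2) := by
    intro i
    obtain ⟨A, B, hAB⟩ := hx i
    refine ⟨A, B, ?_⟩
    rw [← Ideal.mem_span_singleton, ← Ideal.Quotient.eq, map_add, hf]
    exact hAB
  choose AA BB hAB using hrep
  by_cases hd : ∃ i₀, P ^ (V+1) ∣ (f + h i₀)
  · obtain ⟨i₀, hi₀⟩ := hd
    have huniq : ∀ j, j ≠ i₀ → ¬ P ^ (V+1) ∣ (f + h j) := by
      intro j hj hdj
      have hsub : P ^ (V+1) ∣ (h j - h i₀) := by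
        have := dvd_sub hdj hi₀
        have hE : (f + h j) - (f + h i₀) = h j - h i₀ := by ring
        rwa [hE] at this
      exact hV j i₀ hj ((pow_dvd_pow P (by omega)).trans hsub)
    by_cases hd2 : P ^ (2*M+1) ∣ (f + h i₀)
    · refine ⟨f + P ^ (2*M), 2*M+1, by omega, fun i => ?_⟩
      by_cases hii : i = i₀
      · subst hii
        refine ⟨P ^ M, 0, M, 1, ?_, by omega, Or.inl (by rw [mul_one]), ?_⟩
        · have hE : f + P ^ (2*M) + h i - ((P ^ M) ^ 2 + X * 0 ^ 2) = f + h i := by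
            ring
          rw [hE]
          exact hd2
        · intro hu
          exact hPi.not_isUnit (isUnit_of_dvd_one hu)
      · have hg1 : GoodRep P (f + h i) (2*M) :=
          goodRep_of_rep hPm hPi (hAB i) (huniq i hii) (by omega) (by omega)
        have hstep := hensel_step h2 hPi hg1 1
        have hE : f + P ^ (2*M) + h i = f + h i + P ^ (2*M) * 1 := by ring
        rw [hE]
        exact hstep
    · refine ⟨f, 2*M+2, by omega, fun i => ?_⟩
      by_cases hii : i = i₀
      · subst hii
        exact goodRep_of_rep hPm hPi (hAB i) hd2 (le_refl _) (by omega)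
      · exact goodRep_of_rep hPm hPi (hAB i) (huniq i hii) (by omega) (by omega)
  · push_neg at hd
    exact ⟨f, V+2, by omega, fun i =>
      goodRep_of_rep hPm hPi (hAB i) (hd i) (le_refl _) (by omega)⟩

lemma tsetAux_growth {P : F[X]} (h2 : (2 : F) ≠ 0) (hPm : P.Monic) (hPi : Irreducible P)
    {k : ℕ} (h : Fin k → F[X]) {ν : ℕ} :
    Fintype.card F ^ P.natDegree * Nat.card (TsetAux P h ν) ≤
      Nat.card (TsetAux P h (ν + 1)) := by
  classical
  have hle : Ideal.span {P ^ (ν+1)} ≤ Ideal.span ({P ^ ν} : Set F[X]) :=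
    Ideal.span_singleton_le_span_singleton.mpr (pow_dvd_pow P (Nat.le_succ ν))
  set ρ : (F[X] ⧸ Ideal.span {P ^ (ν+1)}) →+* (F[X] ⧸ Ideal.span {P ^ ν}) :=
    Ideal.Quotient.factor hle with hρdef
  have hρmk : ∀ g : F[X], ρ (Ideal.Quotient.mk _ g) = Ideal.Quotient.mk _ g := by
    intro g
    exact Ideal.Quotient.factor_mk hle g
  have hsurj : Function.Surjective ρ := by
    intro y
    obtain ⟨g, hg⟩ := Ideal.Quotient.mk_surjective (I := Ideal.span {P ^ ν}) y
    exact ⟨Ideal.Quotient.mk _ g, by rw [hρmk]; exact hg⟩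
  -- the preimage of TsetAux ν is contained in TsetAux (ν+1)
  have hsub : ρ ⁻¹' (TsetAux P h ν) ⊆ TsetAux P h (ν + 1) := by
    intro y hy
    obtain ⟨f, hf, hgood⟩ := hy
    obtain ⟨g, hg⟩ := Ideal.Quotient.mk_surjective (I := Ideal.span {P ^ (ν+1)}) y
    have hgf : P ^ ν ∣ g - f := by
      rw [← Ideal.mem_span_singleton, ← Ideal.Quotient.eq]
      rw [← hρmk g, hg, hf]
    obtain ⟨t, ht⟩ := hgf
    have hgft : g = f + P ^ ν * t := by
      linear_combination ht
    refine ⟨g, hg, fun i => ?_⟩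
    have := hensel_step h2 hPi (hgood i) t
    have hE : g + h i = f + h i + P ^ ν * t := by
      rw [hgft]; ring
    rw [hE]
    exact this
  -- cardinalities
  haveI : Finite (F[X] ⧸ Ideal.span {P ^ ν}) := aux_finite_quo (hPm.pow ν)
  haveI : Finite (F[X] ⧸ Ideal.span {P ^ (ν+1)}) := aux_finite_quo (hPm.pow (ν+1))
  have hcoe : (ρ.toAddMonoidHom : _ → _) = (ρ : _ → _) := rfl
  have hker : Nat.card ((ρ.toAddMonoidHom : _ → _) ⁻¹' ({0} : Set (F[X] ⧸ Ideal.span {P ^ ν})))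
      = Fintype.card F ^ P.natDegree := by
    have htot := aux_preimage_card ρ.toAddMonoidHom hsurj Set.univ
    rw [Set.preimage_univ, Nat.card_univ, Nat.card_univ,
      aux_card_quo (hPm.pow (ν+1)), aux_card_quo (hPm.pow ν), Polynomial.natDegree_pow,
      Polynomial.natDegree_pow] at htot
    have hq : 0 < Fintype.card F ^ (ν * P.natDegree) := pow_pos Fintype.card_pos _
    have hEq : Fintype.card F ^ ((ν+1) * P.natDegree)
        = Fintype.card F ^ (ν * P.natDegree) * Fintype.card F ^ P.natDegree := by
      rw [← pow_add]
      congr 1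
      ring
    rw [hEq] at htot
    exact (Nat.eq_of_mul_eq_mul_left hq htot).symm
  have hcard := aux_preimage_card ρ.toAddMonoidHom hsurj (TsetAux P h ν)
  rw [hker, hcoe] at hcard
  have hmono : Nat.card ((ρ : _ → _) ⁻¹' (TsetAux P h ν)) ≤ Nat.card (TsetAux P h (ν + 1)) :=
    Nat.card_mono (Set.toFinite _) hsub
  calc Fintype.card F ^ P.natDegree * Nat.card (TsetAux P h ν)
      = Nat.card ((ρ : _ → _) ⁻¹' (TsetAux P h ν)) := by rw [hcard]; ring
    _ ≤ Nat.card (TsetAux P h (ν + 1)) := hmono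

end AuxLocalObstruction2
/-- **Corollary (local obstructions).**
Let `P` be monic irreducible and `h = (h₁,…,h_k)` pairwise distinct. Then
`δ_{q,h}(P) = lim_ν |P|^{−ν}#𝒜_{q,h}(P^ν) = 0` if and only if `𝒜_{q,h}(P^ν) = ∅`
for some `ν ≥ 1`. -/
theorem delta_eq_zero_iff_local_obstruction (F : Type) [Field F] [Fintype F]
    (hF : Odd (Fintype.card F)) (P : F[X]) (hPm : P.Monic) (hPi : Irreducible P)
    (k : ℕ) (h : Fin k → F[X]) (hinj : Function.Injective h) :
    Filter.Tendsto (fun ν : ℕ => (Nat.card ↥(Ahset F h (P ^ ν)) : ℝ) / absP F P ^ ν)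
        Filter.atTop (nhds 0) ↔
      ∃ ν : ℕ, 1 ≤ ν ∧ Ahset F h (P ^ ν) = ∅ := by
  have h2 : (2 : F) ≠ 0 := aux_two_ne_zero hF
  constructor
  · intro htend
    by_contra hcon
    push_neg at hcon
    have hne : ∀ ν : ℕ, 1 ≤ ν → (Ahset F h (P ^ ν)).Nonempty := hcon
    obtain ⟨f₀, ν₀, hν₀, hgood⟩ := exists_good h2 hPm hPi h hinj hne
    set qd : ℕ := Fintype.card F ^ P.natDegree with hqddef
    have hqd : 1 ≤ qd := Nat.one_le_pow _ _ Fintype.card_pos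
    have hT0 : 1 ≤ Nat.card (TsetAux P h ν₀) := by
      haveI : Finite (F[X] ⧸ Ideal.span {P ^ ν₀}) := aux_finite_quo (hPm.pow ν₀)
      have hmem : (Ideal.Quotient.mk (Ideal.span {P ^ ν₀}) f₀) ∈ TsetAux P h ν₀ :=
        ⟨f₀, rfl, hgood⟩
      haveI : Nonempty (TsetAux P h ν₀) := ⟨⟨_, hmem⟩⟩
      exact Nat.card_pos
    have hgrow : ∀ j : ℕ, qd ^ j ≤ Nat.card (TsetAux P h (ν₀ + j)) := by
      intro j
      induction j with
      | zero => simpa using hT0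
      | succ j ih =>
        have hstep := tsetAux_growth (P := P) h2 hPm hPi h (ν := ν₀ + j)
        calc qd ^ (j+1) = qd * qd ^ j := by ring
          _ ≤ qd * Nat.card (TsetAux P h (ν₀ + j)) := Nat.mul_le_mul_left _ ih
          _ ≤ Nat.card (TsetAux P h (ν₀ + j + 1)) := hstep
    have hqdR : (0:ℝ) < (qd : ℝ) := by exact_mod_cast hqd
    have habs : absP F P = (qd : ℝ) := by
      rw [absP, hqddef]
      push_cast
      ring
    set c : ℝ := ((qd:ℝ) ^ ν₀)⁻¹ with hc
    have hcpos : 0 < c := by positivity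
    have hev : ∀ᶠ ν in Filter.atTop,
        c ≤ (Nat.card ↥(Ahset F h (P ^ ν)) : ℝ) / absP F P ^ ν := by
      rw [Filter.eventually_atTop]
      refine ⟨ν₀, fun ν hν => ?_⟩
      obtain ⟨j, rfl⟩ : ∃ j, ν = ν₀ + j := ⟨ν - ν₀, by omega⟩
      haveI : Finite (F[X] ⧸ Ideal.span {P ^ (ν₀ + j)}) := aux_finite_quo (hPm.pow (ν₀+j))
      have h1 : (qd:ℝ)^j ≤ (Nat.card (TsetAux P h (ν₀+j)) : ℝ) := by
        exact_mod_cast hgrow j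
      have h2' : (Nat.card (TsetAux P h (ν₀+j)) : ℝ)
          ≤ (Nat.card ↥(Ahset F h (P^(ν₀+j))) : ℝ) := by
        exact_mod_cast Nat.card_mono (Set.toFinite _) (tsetAux_subset P h _)
      have hnum : (qd:ℝ)^j ≤ (Nat.card ↥(Ahset F h (P^(ν₀+j))) : ℝ) := h1.trans h2'
      rw [habs]
      have hden : ((qd:ℝ))^(ν₀+j) = (qd:ℝ)^ν₀ * (qd:ℝ)^j := pow_add _ _ _
      rw [hden]
      have hceq : c = (qd:ℝ)^j / ((qd:ℝ)^ν₀ * (qd:ℝ)^j) := by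
        rw [hc]
        field_simp
      rw [hceq]
      gcongr
    have hge := ge_of_tendsto htend hev
    linarith
  · rintro ⟨ν₀, hν₀, hempty⟩
    have hEmptyAll : ∀ ν, ν₀ ≤ ν → Ahset F h (P ^ ν) = ∅ := by
      intro ν hν
      rw [Set.eq_empty_iff_forall_notMem]
      intro x hx
      have hle : Ideal.span {P ^ ν} ≤ Ideal.span ({P ^ ν₀} : Set F[X]) :=
        Ideal.span_singleton_le_span_singleton.mpr (pow_dvd_pow P hν)
      have hmem : (Ideal.Quotient.factor hle) x ∈ Ahset F h (P ^ ν₀) := by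
        intro i
        obtain ⟨A, B, hAB⟩ := hx i
        refine ⟨A, B, ?_⟩
        rw [← Ideal.Quotient.factor_mk hle (h i), ← map_add, hAB,
          Ideal.Quotient.factor_mk]
      rw [hempty] at hmem
      exact hmem
    have heq : (fun _ : ℕ => (0:ℝ)) =ᶠ[Filter.atTop]
        (fun ν : ℕ => (Nat.card ↥(Ahset F h (P ^ ν)) : ℝ) / absP F P ^ ν) := by
      rw [Filter.EventuallyEq, Filter.eventually_atTop]
      refine ⟨ν₀, fun ν hν => ?_⟩
      rw [hEmptyAll ν hν]
      simp
    exact Filter.Tendsto.congr' heq tendsto_const_nhds
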